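/- Let g be a finite-dimensional Lie algebra over k whose dual g* carries a Lie algebra bracket [·,·]*. Suppose there exist x ∈ Z(g) (the center of g) and ξ ∈ g* with ad*_ξ(x) ∉ Z(g). Then there is no k-linear map S : g* → End(g*) satisfying −ad*_y ∘ S(η) + S(η) ∘ ad*_y + S(ad*_y η) + ad*_{ad*_η y} = 0 for all y ∈ g and η ∈ g*. (In particular, the Atiyah class of the Lie pair (g ⋈ g*, g) does not vanish.) -/

import Mathlib

open Module

attribute [local instance 100] LieRing.ofAssociativeRing

variable (k : Type*) [Field k] (g : Type*) [LieRing g] [LieAlgebra k g]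

/-- `adStar k g x` is the dual (transpose) of `ad x : g →ₗ[k] g`,
so `adStar k g x ξ y = ξ ⁅x, y⁆`. -/
noncomputable def adStar : g →ₗ[k] Module.End k (Module.Dual k g) :=
  (Module.Dual.transpose (R := k)) ∘ₗ (LieAlgebra.ad k g).toLinearMap

/-- If some `x ∈ Z(g)` and `ξ ∈ g*` satisfy `ad*_ξ x ∉ Z(g)`, then there is no linear map
`S : g* → End(g*)` satisfying the Atiyah cocycle equation
`−ad*_y ∘ S(η) + S(η) ∘ ad*_y + S(ad*_y η) + ad*_{ad*_η y} = 0` for all `y, η`.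
(In particular the Atiyah class of the Lie pair `(g ⋈ g*, g)` does not vanish.) -/
theorem no_compatible_connection_of_center_not_invariant [FiniteDimensional k g]
    (br : Module.Dual k g →ₗ[k] Module.Dual k g →ₗ[k] Module.Dual k g)
    (hskew : ∀ ξ, br ξ ξ = 0)
    (hjac : ∀ ξ η ζ, br ξ (br η ζ) = br (br ξ η) ζ + br η (br ξ ζ))
    (astar : Module.Dual k g →ₗ[k] g →ₗ[k] g)
    (hastar : ∀ (ξ η : Module.Dual k g) (x : g), η (astar ξ x) = br ξ η x)
    (x : g) (hx : x ∈ LieAlgebra.center k g)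
    (ξ : Module.Dual k g) (hξ : astar ξ x ∉ LieAlgebra.center k g) :
    ¬ ∃ S : Module.Dual k g →ₗ[k] Module.End k (Module.Dual k g),
        ∀ (y : g) (η : Module.Dual k g),
          -(adStar k g y * S η) + S η * adStar k g y + S (adStar k g y η)
            + adStar k g (astar η y) = 0 := by
  rintro ⟨S, hS⟩
  have hxz : ∀ y : g, ⁅x, y⁆ = 0 := by
    intro y
    rw [← neg_eq_zero, lie_skew]
    exact hx y
  have h1 : adStar k g x = 0 := by
    ext η y
    simp [adStar, Module.Dual.transpose_apply, LieAlgebra.ad_apply, hxz]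
  have h2 := hS x ξ
  rw [h1] at h2
  simp only [zero_mul, mul_zero, neg_zero, zero_add, LinearMap.zero_apply,
    map_zero] at h2
  -- h2 : adStar k g (astar ξ x) = 0
  apply hξ
  rw [LieAlgebra.center, LieModule.mem_maxTrivSubmodule]
  intro y
  rw [← neg_eq_zero, ← lie_skew, neg_neg]
  have : ∀ η : Module.Dual k g, η ⁅astar ξ x, y⁆ = 0 := by
    intro η
    have := congrFun (congrArg (fun f => (f η : g → k)) h2) y
    simpa [adStar, Module.Dual.transpose_apply, LieAlgebra.ad_apply] using this
  exact (Module.forall_dual_apply_eq_zero_iff k _).mp this
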